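/- Let G=(V,E) be a finite graph with positive edge weights W, let n = |V|, and let g: [0,1] → ℝ be a function such that every subset S ⊆ V satisfies w(S,S) ≥ g(|S|/n). Then for every ordering σ of V, SVC_G(σ) ≥ W(E) · Σ_{t=0}^{n−1} g(1 − t/n). -/
import Mathlib


/-- The position (in `{1, …, n}`) at which vertex `v` is visited by the ordering `σ`. -/
def vertexPos {V : Type*} [Fintype V] (σ : Fin (Fintype.card V) ≃ V) (v : V) : ℕ :=
  (σ.symm v : ℕ) + 1

/-- The cover time `c_{σ,e}` of an edge with endpoints `u` and `w` under the ordering `σ`. -/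
def coverTime {V : Type*} [Fintype V] (σ : Fin (Fintype.card V) ≃ V) (u w : V) : ℕ :=
  min (vertexPos σ u) (vertexPos σ w)

/-- The sum vertex cover value `SVC_G(σ) = Σ_e W_e · c_{σ,e}` of a weighted multigraph. -/
noncomputable def SVC {V ι : Type*} [Fintype V] [Fintype ι]
    (a b : ι → V) (W : ι → ℝ) (σ : Fin (Fintype.card V) ≃ V) : ℝ :=
  ∑ e : ι, W e * (coverTime σ (a e) (b e) : ℝ)

/-- The total weight of edges with both endpoints in the vertex set `S`. -/
noncomputable def weightWithin {V ι : Type*} [DecidableEq V] [Fintype ι]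
    (a b : ι → V) (W : ι → ℝ) (S : Finset V) : ℝ :=
  ∑ e ∈ Finset.univ.filter (fun e : ι => a e ∈ S ∧ b e ∈ S), W e

/-- Let `G` be a finite graph with positive edge weights, `n = |V|`, and let
`g : [0,1] → ℝ` be such that every `S ⊆ V` satisfies `w(S,S) ≥ g(|S|/n)`.  Then every
ordering `σ` satisfies `SVC_G(σ) ≥ W(E) · Σ_{t=0}^{n−1} g(1 − t/n)`. -/
theorem svc_density_lower_bound {V ι : Type*} [Fintype V] [DecidableEq V] [Fintype ι]
    (a b : ι → V) (W : ι → ℝ) (hW : ∀ e, 0 < W e) (g : ℝ → ℝ)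
    (hdense : ∀ S : Finset V,
      g ((S.card : ℝ) / (Fintype.card V : ℝ)) ≤ weightWithin a b W S / ∑ e : ι, W e)
    (σ : Fin (Fintype.card V) ≃ V) :
    (∑ e : ι, W e) *
        ∑ t ∈ Finset.range (Fintype.card V), g (1 - (t : ℝ) / (Fintype.card V : ℝ)) ≤
      SVC a b W σ := by
  classical
  rcases isEmpty_or_nonempty ι with hι | hι
  · simp [SVC]
  have hWE : 0 < ∑ e : ι, W e := Finset.sum_pos (fun e _ => hW e) Finset.univ_nonempty
  have hV : 0 < Fintype.card V := Fintype.card_pos_iff.mpr ⟨a (Classical.arbitrary ι)⟩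
  set S : ℕ → Finset V := fun t => Finset.univ.filter (fun v => t < vertexPos σ v) with hS
  have hpos_le : ∀ v, vertexPos σ v ≤ (Fintype.card V) := fun v => (σ.symm v).isLt
  have hcov_le : ∀ e : ι, coverTime σ (a e) (b e) ≤ (Fintype.card V) := fun e =>
    le_trans (min_le_left _ _) (hpos_le (a e))
  have hmem : ∀ (t : ℕ) (e : ι),
      (a e ∈ S t ∧ b e ∈ S t) ↔ t < coverTime σ (a e) (b e) := by
    intro t e
    simp [hS, coverTime, lt_min_iff]
  have inner : ∀ (c : ℕ) (x : ℝ), c ≤ (Fintype.card V) →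
      (∑ t ∈ Finset.range (Fintype.card V), if t < c then x else 0) = c * x := by
    intro c x hc
    rw [← Finset.sum_filter]
    have h : (Finset.range (Fintype.card V)).filter (fun t => t < c) = Finset.range c := by
      ext t; simp only [Finset.mem_filter, Finset.mem_range]; omega
    rw [h, Finset.sum_const, Finset.card_range, nsmul_eq_mul]
  have key : SVC a b W σ = ∑ t ∈ Finset.range (Fintype.card V), weightWithin a b W (S t) := by
    unfold SVC weightWithin
    have h5 : ∀ t ∈ Finset.range (Fintype.card V),
        (∑ e ∈ Finset.univ.filter (fun e : ι => a e ∈ S t ∧ b e ∈ S t), W e)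
          = ∑ e : ι, if t < coverTime σ (a e) (b e) then W e else 0 := by
      intro t _
      rw [Finset.sum_filter]
      exact Finset.sum_congr rfl fun e _ => if_congr (hmem t e) rfl rfl
    rw [Finset.sum_congr rfl h5, Finset.sum_comm]
    refine Finset.sum_congr rfl fun e _ => ?_
    rw [inner _ _ (hcov_le e), mul_comm]
  have hcard : ∀ t, t < (Fintype.card V) → (S t).card = (Fintype.card V) - t := by
    intro t ht
    have h1 : (S t).card = ∑ v : V, if t < vertexPos σ v then 1 else 0 := by
      rw [hS]; rw [Finset.card_filter]
    rw [h1, ← Equiv.sum_comp σ (fun v => if t < vertexPos σ v then 1 else 0)]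
    have h2 : ∀ i : Fin (Fintype.card V), vertexPos σ (σ i) = (i : ℕ) + 1 := by
      intro i; simp [vertexPos]
    calc (∑ i : Fin (Fintype.card V), if t < vertexPos σ (σ i) then 1 else 0)
        = ∑ i : Fin (Fintype.card V), if t < (i : ℕ) + 1 then 1 else 0 := by
          refine Finset.sum_congr rfl fun i _ => by rw [h2]
      _ = ∑ i ∈ Finset.range (Fintype.card V), if t < i + 1 then 1 else 0 :=
          Fin.sum_univ_eq_sum_range (fun i => if t < i + 1 then 1 else 0) (Fintype.card V)
      _ = ((Finset.range (Fintype.card V)).filter (fun i => t < i + 1)).card := by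
          rw [Finset.card_filter]
      _ = (Fintype.card V) - t := by
          have h4 : (Finset.range (Fintype.card V)).filter (fun i => t < i + 1) = Finset.Ico t (Fintype.card V) := by
            ext i; simp only [Finset.mem_filter, Finset.mem_range, Finset.mem_Ico]; omega
          rw [h4, Nat.card_Ico]
  rw [key, Finset.mul_sum]
  refine Finset.sum_le_sum fun t ht => ?_
  rw [Finset.mem_range] at ht
  have h3 : (1 : ℝ) - (t : ℝ) / (Fintype.card V) = ((S t).card : ℝ) / (Fintype.card V) := by
    rw [hcard t ht]
    have hn0 : ((Fintype.card V) : ℝ) ≠ 0 := Nat.cast_ne_zero.mpr hV.ne'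
    rw [Nat.cast_sub ht.le]
    field_simp
  rw [h3]
  have h6 := hdense (S t)
  rw [le_div_iff₀ hWE] at h6
  calc (∑ e : ι, W e) * g (((S t).card : ℝ) / (Fintype.card V))
      = g (((S t).card : ℝ) / (Fintype.card V)) * ∑ e : ι, W e := mul_comm _ _
    _ ≤ weightWithin a b W (S t) := h6
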